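/- Optimal substructure of the Yes-case: for a subtree T_u rooted at u with children x₁,…,x_l, a budget k ≥ 1, and a fixed outside set S disjoint from des(u), the maximum over all S_u ⊆ des(u) \ {u} with |S_u| = k−1 of g_{T_u}(S ∪ {u} ∪ S_u) equals feq(u) + max over (k₁,…,k_l) with Σ k_i = k−1 of Σ_i [max over S_i ⊆ des(x_i), |S_i| = k_i of g_{T_{x_i}}(S ∪ {u} ∪ S_i)]. -/

import Mathlib

/-- Optimal substructure of the Yes-case of the DP: for a subtree rooted at `u`
with children `x₁,…,x_l`, budget `k ≥ 1`, and an outside set `S` disjoint from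
`des u`, the best score over `S_u ⊆ des u \ {u}` with `|S_u| = k−1` of
`g_{T_u}(S ∪ {u} ∪ S_u)` equals `feq u` plus the best split of budget `k−1`
among the children subtrees (with `u` selected). -/
theorem stmt_14 {V : Type*} [Fintype V] [DecidableEq V]
    (anc des : V → Finset V) (hancrefl : ∀ y, y ∈ anc y)
    (feq : V → NNReal)
    (cor : V → V → NNReal) (hcor : ∀ x y, x ∉ anc y → cor x y = 0)
    (hcorle : ∀ x y, cor x y ≤ 1) (hcor1 : ∀ y, cor y y = 1)
    (smy : Finset V → V → NNReal)
    (hsmy : ∀ A y, smy A y = (A ∩ anc y).sup (fun z => feq y * cor z y))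
    (gT : V → Finset V → NNReal)
    (hgT : ∀ w A, gT w A = ∑ y ∈ des w, smy A y)
    (u : V) (l : ℕ) (child : Fin l → V)
    (hdesu : des u = insert u (Finset.univ.biUnion (fun i : Fin l => des (child i))))
    (hunot : u ∉ Finset.univ.biUnion (fun i : Fin l => des (child i)))
    (hdisj : ∀ i j : Fin l, i ≠ j → Disjoint (des (child i)) (des (child j)))
    (hkey : ∀ i : Fin l, ∀ y ∈ des (child i), anc y ∩ des u ⊆ insert u (des (child i)))
    (S : Finset V) (hS : S ∩ des u = ∅)
    (k : ℕ) (hk : 1 ≤ k) (hk' : k - 1 ≤ ((des u).erase u).card) :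
    (((des u).erase u).powersetCard (k - 1)).sup (fun Su => gT u (S ∪ insert u Su)) =
      feq u + (Finset.Nat.antidiagonalTuple l (k - 1)).sup (fun κ =>
        ∑ i : Fin l,
          ((des (child i)).powersetCard (κ i)).sup
            (fun Si => gT (child i) (insert u S ∪ Si))) := by
  have herase : (des u).erase u = Finset.univ.biUnion (fun i : Fin l => des (child i)) := by
    rw [hdesu, Finset.erase_insert hunot]
  have hsmono : ∀ A B y, A ⊆ B → smy A y ≤ smy B y := by
    intro A B y h
    rw [hsmy, hsmy]
    exact Finset.sup_mono (Finset.inter_subset_inter h le_rfl)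
  have hgmono : ∀ w A B, A ⊆ B → gT w A ≤ gT w B := by
    intro w A B h
    rw [hgT, hgT]
    exact Finset.sum_le_sum fun y _ => hsmono A B y h
  -- key decomposition lemma
  have hdecomp : ∀ Su ⊆ (des u).erase u,
      gT u (S ∪ insert u Su)
        = feq u + ∑ i : Fin l, gT (child i) (insert u S ∪ (Su ∩ des (child i))) := by
    intro Su hSu
    have hu : smy (S ∪ insert u Su) u = feq u := by
      rw [hsmy]
      apply le_antisymm
      · refine Finset.sup_le fun z hz => ?_
        calc feq u * cor z u ≤ feq u * 1 := mul_le_mul_right (hcorle z u) _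
          _ = feq u := mul_one _
      · have hmem : u ∈ (S ∪ insert u Su) ∩ anc u :=
          Finset.mem_inter.2 ⟨Finset.mem_union_right _ (Finset.mem_insert_self _ _), hancrefl u⟩
        have := Finset.le_sup (f := fun z => feq u * cor z u) hmem
        simpa [hcor1] using this
    have hy : ∀ i : Fin l, ∀ y ∈ des (child i),
        smy (S ∪ insert u Su) y = smy (insert u S ∪ (Su ∩ des (child i))) y := by
      intro i y hyi
      rw [hsmy, hsmy]
      congr 1
      ext z
      simp only [Finset.mem_inter, Finset.mem_union, Finset.mem_insert]
      constructor
      · rintro ⟨hz1, hz2⟩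
        refine ⟨?_, hz2⟩
        rcases hz1 with hz1 | (rfl | hzSu)
        · exact Or.inl (Or.inr hz1)
        · exact Or.inl (Or.inl rfl)
        · have hzdes : z ∈ des u := Finset.mem_of_mem_erase (hSu hzSu)
          have hzne : z ≠ u := Finset.ne_of_mem_erase (hSu hzSu)
          have h2 := hkey i y hyi (Finset.mem_inter.2 ⟨hz2, hzdes⟩)
          rcases Finset.mem_insert.1 h2 with rfl | h3
          · exact absurd rfl hzne
          · exact Or.inr ⟨hzSu, h3⟩
      · rintro ⟨hz1, hz2⟩
        refine ⟨?_, hz2⟩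
        rcases hz1 with (rfl | hzS) | ⟨hzSu, _⟩
        · exact Or.inr (Or.inl rfl)
        · exact Or.inl hzS
        · exact Or.inr (Or.inr hzSu)
    rw [hgT, hdesu, Finset.sum_insert hunot,
      Finset.sum_biUnion (fun i _ j _ hij => hdisj i j hij), hu]
    congr 1
    refine Finset.sum_congr rfl fun i _ => ?_
    rw [hgT]
    exact Finset.sum_congr rfl fun y hyi => hy i y hyi
  -- cardinality decomposition
  have hcard : ∀ Su ⊆ (des u).erase u,
      ∑ i : Fin l, (Su ∩ des (child i)).card = Su.card := by
    intro Su hSu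
    have heq : Su = Finset.univ.biUnion (fun i => Su ∩ des (child i)) := by
      ext z
      simp only [Finset.mem_biUnion, Finset.mem_inter, Finset.mem_univ, true_and]
      constructor
      · intro hz
        have hz2 := herase ▸ hSu hz
        rcases Finset.mem_biUnion.1 hz2 with ⟨i, _, hi⟩
        exact ⟨i, hz, hi⟩
      · rintro ⟨i, hz, _⟩
        exact hz
    conv_rhs => rw [heq]
    rw [Finset.card_biUnion]
    intro i _ j _ hij
    exact (hdisj i j hij).mono Finset.inter_subset_right Finset.inter_subset_right
  apply le_antisymm
  · refine Finset.sup_le fun Su hSu => ?_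
    obtain ⟨hsub, hcardSu⟩ := Finset.mem_powersetCard.1 hSu
    rw [hdecomp Su hsub]
    refine add_le_add_right ?_ _
    have hκ : (fun i => (Su ∩ des (child i)).card) ∈ Finset.Nat.antidiagonalTuple l (k - 1) := by
      rw [Finset.Nat.mem_antidiagonalTuple, hcard Su hsub, hcardSu]
    refine le_trans ?_ (Finset.le_sup hκ)
    refine Finset.sum_le_sum fun i _ => ?_
    exact Finset.le_sup (f := fun T => gT (child i) (insert u S ∪ T))
      (Finset.mem_powersetCard.2 ⟨Finset.inter_subset_right, rfl⟩)
  · obtain ⟨Su0, hSu0mem⟩ := Finset.powersetCard_nonempty.2 hk'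
    rcases Finset.eq_empty_or_nonempty (Finset.Nat.antidiagonalTuple l (k - 1)) with hemp | hne
    · rw [hemp, Finset.sup_empty]
      have hsub := (Finset.mem_powersetCard.1 hSu0mem).1
      refine le_trans ?_ (Finset.le_sup (f := fun Su => gT u (S ∪ insert u Su)) hSu0mem)
      show feq u + ⊥ ≤ gT u (S ∪ insert u Su0)
      rw [hdecomp Su0 hsub]
      exact add_le_add_right bot_le _
    · obtain ⟨κ, hκmem, hκeq⟩ := Finset.exists_mem_eq_sup _ hne (fun κ : Fin l → ℕ =>
        ∑ i : Fin l, ((des (child i)).powersetCard (κ i)).sup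
          (fun Si => gT (child i) (insert u S ∪ Si)))
      rw [hκeq]
      have hκsum : ∑ i, κ i = k - 1 := Finset.Nat.mem_antidiagonalTuple.1 hκmem
      have hex : ∀ i : Fin l, ∃ Si, Si ⊆ des (child i) ∧ Si.card ≤ κ i ∧
          ((des (child i)).powersetCard (κ i)).sup
            (fun T => gT (child i) (insert u S ∪ T)) ≤ gT (child i) (insert u S ∪ Si) := by
        intro i
        rcases Finset.eq_empty_or_nonempty ((des (child i)).powersetCard (κ i)) with h | h
        · exact ⟨∅, Finset.empty_subset _, Nat.zero_le _,
            by rw [h, Finset.sup_empty]; exact bot_le⟩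
        · obtain ⟨T, hT, hTeq⟩ := Finset.exists_mem_eq_sup _ h
            (fun T => gT (child i) (insert u S ∪ T))
          obtain ⟨hT1, hT2⟩ := Finset.mem_powersetCard.1 hT
          exact ⟨T, hT1, le_of_eq hT2, le_of_eq hTeq⟩
      choose Si hSi1 hSi2 hSi3 using hex
      have hSu0sub : Finset.univ.biUnion Si ⊆ (des u).erase u := by
        rw [herase]
        exact Finset.biUnion_subset.2 fun i _ =>
          (hSi1 i).trans (Finset.subset_biUnion_of_mem (fun i => des (child i)) (Finset.mem_univ i))
      have hSu0card : (Finset.univ.biUnion Si).card ≤ k - 1 :=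
        le_trans Finset.card_biUnion_le (by rw [← hκsum]; exact Finset.sum_le_sum fun i _ => hSi2 i)
      obtain ⟨Su, hsub1, hsub2, hScard⟩ :=
        Finset.exists_subsuperset_card_eq hSu0sub hSu0card hk'
      have hmem : Su ∈ ((des u).erase u).powersetCard (k - 1) :=
        Finset.mem_powersetCard.2 ⟨hsub2, hScard⟩
      refine le_trans ?_ (Finset.le_sup hmem)
      rw [hdecomp Su hsub2]
      refine add_le_add_right (Finset.sum_le_sum fun i _ => ?_) _
      refine le_trans (hSi3 i) (hgmono _ _ _ ?_)
      refine Finset.union_subset_union le_rfl ?_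
      intro z hz
      exact Finset.mem_inter.2
        ⟨hsub1 (Finset.mem_biUnion.2 ⟨i, Finset.mem_univ i, hz⟩), hSi1 i hz⟩
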